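/- Let h, m be relatively prime positive integers, k an integer, and p an odd positive integer \ge 3. Then \sum_{s=0}^{p+1} \binom{p+1}{s} B_s B_{p+1-s}^{(k)}(1) (mh)^{p+1-s} = m^p \sum_{\mu=0}^{m-1} \sum_{s=0}^{p+1} \binom{p+1}{s} h^s B_s^{(k)}(\mu/m) B_{p+1-s}(h - \lfloor h\mu/m \rfloor). -/

import Mathlib

noncomputable section

/-- Signed Stirling numbers of the first kind. -/
def stirling1 : ℕ → ℕ → ℤ
  | 0, 0 => 1
  | 0, _ + 1 => 0
  | _ + 1, 0 => 0
  | n + 1, m + 1 => stirling1 n m - n * stirling1 n (m + 1)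

/-- `n!`-normalized coefficients of `Ei_k (log (1+t))`. -/
def polyExpCoeff (k : ℤ) (n : ℕ) : ℚ :=
  ∑ m ∈ Finset.Icc 1 n, (stirling1 n m : ℚ) / (m : ℚ) ^ (k - 1)

/-- Type 2 poly-Bernoulli numbers of index `k`, defined by the recursion coming from the
generating function `Ei_k (log (1+t)) / (e^t - 1) = ∑ B_n^{(k)} t^n/n!`. -/
def polyBernoulli (k : ℤ) : ℕ → ℚ
  | n =>
    (polyExpCoeff k (n + 1) -
      ∑ l ∈ (Finset.range n).attach, ((n + 1).choose l.1 : ℚ) * polyBernoulli k l.1) / (n + 1)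
  termination_by n => n
  decreasing_by exact Finset.mem_range.mp l.2

/-- Type 2 poly-Bernoulli polynomials of index `k`, as functions on `ℝ`. -/
def polyBernoulliPoly (k : ℤ) (n : ℕ) (x : ℝ) : ℝ :=
  ∑ l ∈ Finset.range (n + 1), (n.choose l : ℝ) * (polyBernoulli k l : ℝ) * x ^ (n - l)

/-- Bernoulli polynomials as functions on `ℝ`. -/
def bernoulliPolyFun (n : ℕ) (x : ℝ) : ℝ :=
  ∑ l ∈ Finset.range (n + 1), (n.choose l : ℝ) * (bernoulli l : ℝ) * x ^ (n - l)

/-- Bernoulli functions `B̄_n(x) = B_n(⟨x⟩)`. -/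
def bernoulliBar (n : ℕ) (x : ℝ) : ℝ := bernoulliPolyFun n (Int.fract x)

/-- Type 2 poly-Bernoulli functions `B̄_n^{(k)}(x) = B_n^{(k)}(⟨x⟩)`. -/
def polyBernoulliBar (k : ℤ) (n : ℕ) (x : ℝ) : ℝ := polyBernoulliPoly k n (Int.fract x)

/-- Poly-Dedekind sums `S_p^{(k)}(h,m)`. -/
def polyDedekindSum (k : ℤ) (p h m : ℕ) : ℝ :=
  ∑ μ ∈ Finset.Ico 1 m, (μ / m : ℝ) * polyBernoulliBar k p (h * μ / m)

/-- Apostol's generalized Dedekind sums `S_p(h,m)`. -/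
def genDedekindSum (p h m : ℕ) : ℝ :=
  ∑ μ ∈ Finset.Ico 1 m, (μ / m : ℝ) * bernoulliBar p (h * μ / m)

/-- The polyexponential function `Ei_k`. -/
def polyExp (k : ℤ) (x : ℝ) : ℝ :=
  ∑' n : ℕ, x ^ (n + 1) / ((n + 1 : ℝ) ^ k * (Nat.factorial n : ℝ))

/-- The sawtooth function `((x))`. -/
def sawtooth (x : ℝ) : ℝ := if Int.fract x = 0 then 0 else Int.fract x - 1 / 2

end

open Finset PowerSeries in
lemma raabe_q (m : ℕ) (hm : 0 < m) (x : ℚ) (N : ℕ) :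
    (m : ℚ) * (Polynomial.bernoulli N).eval ((m : ℚ) * x) =
      (m : ℚ) ^ N * ∑ r ∈ Finset.range m, (Polynomial.bernoulli N).eval (x + (r : ℚ) / m) := by
  have hm0 : (m : ℚ) ≠ 0 := Nat.cast_ne_zero.mpr hm.ne'
  set E := PowerSeries.exp ℚ with hE
  set F : ℚ → ℚ⟦X⟧ := fun t =>
    PowerSeries.mk fun n => Polynomial.aeval t ((1 / (Nat.factorial n) : ℚ) • Polynomial.bernoulli n) with hF
  have key : ∀ t : ℚ, F t * (E - 1) = PowerSeries.X * rescale t E :=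
    fun t => Polynomial.bernoulli_generating_function t
  set G : ℚ⟦X⟧ := ∑ r ∈ Finset.range m, E ^ r with hG
  -- h1: rescaled generating function identity
  have h1 : ∀ r : ℕ, rescale (m : ℚ) (F (x + r / m)) * (rescale (m : ℚ) E - 1) =
      PowerSeries.C (m : ℚ) * PowerSeries.X * rescale ((m : ℚ) * x) E * E ^ r := by
    intro r
    have := congrArg (rescale (m : ℚ)) (key (x + r / m))
    rw [map_mul, map_sub, map_one, map_mul, rescale_X, rescale_rescale] at this
    rw [this]
    have harg : (x + (r : ℚ) / m) * m = (m : ℚ) * x + r := by field_simp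
    rw [harg, ← exp_mul_exp_eq_exp_add, exp_pow_eq_rescale_exp]
    ring
  have h2 : (∑ r ∈ Finset.range m, rescale (m : ℚ) (F (x + r / m))) * (rescale (m : ℚ) E - 1) =
      PowerSeries.C (m : ℚ) * PowerSeries.X * rescale ((m : ℚ) * x) E * G := by
    rw [Finset.sum_mul, hG, Finset.mul_sum]
    exact Finset.sum_congr rfl fun r _ => h1 r
  have h3 : G * (E - 1) = rescale (m : ℚ) E - 1 := by
    rw [hG, geom_sum_mul, exp_pow_eq_rescale_exp]
  have h4 : F ((m : ℚ) * x) * (E - 1) = PowerSeries.X * rescale ((m : ℚ) * x) E :=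
    key _
  have hne : G * (E - 1) ≠ 0 := by
    rw [h3]
    intro hcon
    have := congrArg (PowerSeries.coeff 1) hcon
    simp [coeff_rescale, PowerSeries.coeff_exp] at this
    rcases this with h | h
    · exact hm.ne' h
    · simp [hE, PowerSeries.coeff_exp] at h
  have main : PowerSeries.C (m : ℚ) * F ((m : ℚ) * x) =
      ∑ r ∈ Finset.range m, rescale (m : ℚ) (F (x + r / m)) := by
    apply mul_right_cancel₀ hne
    calc PowerSeries.C (m : ℚ) * F ((m : ℚ) * x) * (G * (E - 1))
        = PowerSeries.C (m : ℚ) * (F ((m : ℚ) * x) * (E - 1)) * G := by ring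
      _ = PowerSeries.C (m : ℚ) * PowerSeries.X * rescale ((m : ℚ) * x) E * G := by
          rw [h4]; ring
      _ = (∑ r ∈ Finset.range m, rescale (m : ℚ) (F (x + r / m))) * (rescale (m : ℚ) E - 1) :=
          h2.symm
      _ = (∑ r ∈ Finset.range m, rescale (m : ℚ) (F (x + r / m))) * (G * (E - 1)) := by rw [h3]
  have := congrArg (PowerSeries.coeff N) main
  rw [PowerSeries.coeff_C_mul, map_sum] at this
  simp only [hF, coeff_rescale, PowerSeries.coeff_mk, Polynomial.aeval_def, map_smul,
    Polynomial.eval₂_at_apply] at this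
  have hfac : ((Nat.factorial N) : ℚ) ≠ 0 := Nat.cast_ne_zero.mpr (Nat.factorial_ne_zero N)
  simp only [smul_eq_mul, Polynomial.eval_smul] at this
  -- this : m * ((1/N!) * eval (m*x) B_N) = ∑ r, m^N * ((1/N!) * eval (x+r/m) B_N)
  rw [Finset.mul_sum]
  calc (m : ℚ) * Polynomial.eval ((m:ℚ)*x) (Polynomial.bernoulli N)
      = (Nat.factorial N : ℚ) * ((m:ℚ) * (1 / (Nat.factorial N : ℚ) *
          Polynomial.eval ((m:ℚ)*x) (Polynomial.bernoulli N))) := by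
        field_simp
    _ = (Nat.factorial N : ℚ) * ∑ r ∈ Finset.range m, (m:ℚ) ^ N *
          (1 / (Nat.factorial N : ℚ) * Polynomial.eval (x + (r:ℚ)/m) (Polynomial.bernoulli N)) := by
        simp only [Polynomial.eval₂_eq_eval_map, Algebra.algebraMap_self, Polynomial.map_id] at this
        rw [this]
    _ = ∑ r ∈ Finset.range m, (m:ℚ)^N * Polynomial.eval (x + (r:ℚ)/m) (Polynomial.bernoulli N) := by
        rw [Finset.mul_sum]
        refine Finset.sum_congr rfl fun r _ => ?_
        field_simp

lemma bpf_ratCast (N : ℕ) (q : ℚ) :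
    bernoulliPolyFun N (q : ℝ) = (((Polynomial.bernoulli N).eval q : ℚ) : ℝ) := by
  unfold bernoulliPolyFun
  rw [Polynomial.bernoulli, Polynomial.eval_finset_sum]
  push_cast
  refine Finset.sum_congr rfl fun l hl => ?_
  rw [Polynomial.eval_monomial]
  push_cast
  ring

lemma raabe_r (m h : ℕ) (hm : 0 < m) (N : ℕ) :
    (m : ℝ) * bernoulliPolyFun N ((m : ℝ) * (h : ℝ)) =
      (m : ℝ) ^ N * ∑ r ∈ Finset.range m, bernoulliPolyFun N ((h : ℝ) + (r : ℝ) / m) := by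
  have key := raabe_q m hm (h : ℚ) N
  have h1 : ((m : ℝ) * (h : ℝ)) = (((m : ℚ) * (h : ℚ) : ℚ) : ℝ) := by push_cast; ring
  have h2 : ∀ r : ℕ, ((h : ℝ) + (r : ℝ) / m) = (((h : ℚ) + (r : ℚ) / m : ℚ) : ℝ) := by
    intro r; push_cast; ring
  rw [h1, bpf_ratCast, Finset.sum_congr rfl fun r _ => by rw [h2 r, bpf_ratCast]]
  exact_mod_cast key

/-- trinomial symmetry of binomial coefficients -/
lemma tri_choose (N s u : ℕ) : N.choose s * (N - s).choose u = N.choose u * (N - u).choose s := by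
  rcases le_or_gt (s + u) N with hle | hlt
  · have h1 : N.choose (s + u) * (s + u).choose s = N.choose s * (N - s).choose u := by
      have := Nat.choose_mul (n := N) (k := s + u) (s := s) (Nat.le_add_right s u)
      simpa [Nat.add_sub_cancel_left] using this
    have h2 : N.choose (s + u) * (s + u).choose u = N.choose u * (N - u).choose s := by
      have := Nat.choose_mul (n := N) (k := s + u) (s := u) (Nat.le_add_left u s)
      simpa [Nat.add_sub_cancel] using this
    have h3 : (s + u).choose u = (s + u).choose s := by
      have := Nat.choose_symm (n := s + u) (k := s) (Nat.le_add_right s u)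
      simpa [Nat.add_sub_cancel_left] using this
    rw [← h1, ← h2, h3]
  · have l1 : N.choose s * (N - s).choose u = 0 := by
      rcases le_or_gt s N with hs | hs
      · exact mul_eq_zero_of_right _ (Nat.choose_eq_zero_of_lt (by omega))
      · exact mul_eq_zero_of_left (Nat.choose_eq_zero_of_lt hs) _
    have l2 : N.choose u * (N - u).choose s = 0 := by
      rcases le_or_gt u N with hu | hu
      · exact mul_eq_zero_of_right _ (Nat.choose_eq_zero_of_lt (by omega))
      · exact mul_eq_zero_of_left (Nat.choose_eq_zero_of_lt hu) _
    rw [l1, l2]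

open Finset in
lemma convol (N : ℕ) (x y : ℝ) :
    ∑ s ∈ Finset.range (N + 1), (N.choose s : ℝ) * x ^ s * bernoulliPolyFun (N - s) y
      = bernoulliPolyFun N (x + y) := by
  have hL : ∑ s ∈ Finset.range (N + 1), (N.choose s : ℝ) * x ^ s * bernoulliPolyFun (N - s) y
      = ∑ s ∈ Finset.range (N + 1), ∑ u ∈ Finset.range (N + 1),
          (N.choose s : ℝ) * ((N - s).choose u : ℝ) * x ^ s * (bernoulli u : ℝ) *
            y ^ (N - s - u) := by
    refine Finset.sum_congr rfl fun s hs => ?_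
    unfold bernoulliPolyFun
    rw [Finset.mul_sum]
    rw [Finset.sum_subset (Finset.range_subset_range.mpr (by omega) :
      Finset.range (N - s + 1) ⊆ Finset.range (N + 1))]
    · exact Finset.sum_congr rfl fun u hu => by ring
    · intro u hu hnu
      have : N - s < u := by simp only [Finset.mem_range, not_lt] at hnu ⊢; omega
      simp [Nat.choose_eq_zero_of_lt this]
  have hR : bernoulliPolyFun N (x + y)
      = ∑ u ∈ Finset.range (N + 1), ∑ s ∈ Finset.range (N + 1),
          (N.choose u : ℝ) * ((N - u).choose s : ℝ) * x ^ s * (bernoulli u : ℝ) *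
            y ^ (N - u - s) := by
    unfold bernoulliPolyFun
    refine Finset.sum_congr rfl fun u hu => ?_
    rw [add_pow, Finset.mul_sum]
    rw [Finset.sum_subset (Finset.range_subset_range.mpr (by omega) :
      Finset.range (N - u + 1) ⊆ Finset.range (N + 1))]
    · exact Finset.sum_congr rfl fun s hs => by ring
    · intro s hs hns
      have : N - u < s := by simp only [Finset.mem_range, not_lt] at hns ⊢; omega
      simp [Nat.choose_eq_zero_of_lt this]
  rw [hL, hR, Finset.sum_comm]
  refine Finset.sum_congr rfl fun u hu => Finset.sum_congr rfl fun s hs => ?_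
  have hc : (N.choose s : ℝ) * ((N - s).choose u : ℝ) =
      (N.choose u : ℝ) * ((N - u).choose s : ℝ) := by
    exact_mod_cast congrArg (Nat.cast (R := ℝ)) (tri_choose N s u)
  have he : N - s - u = N - u - s := by omega
  rw [he]
  calc (N.choose s : ℝ) * ((N - s).choose u : ℝ) * x ^ s * (bernoulli u : ℝ) * y ^ (N - u - s)
      = ((N.choose s : ℝ) * ((N - s).choose u : ℝ)) * (x ^ s * (bernoulli u : ℝ) *
          y ^ (N - u - s)) := by ring
    _ = ((N.choose u : ℝ) * ((N - u).choose s : ℝ)) * (x ^ s * (bernoulli u : ℝ) *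
          y ^ (N - u - s)) := by rw [hc]
    _ = _ := by ring

open Finset in
lemma restruct (n : ℕ) (a : ℕ → ℝ) (x y : ℝ) :
    ∑ s ∈ Finset.range (n + 1), (n.choose s : ℝ) *
        (∑ l ∈ Finset.range (s + 1), (s.choose l : ℝ) * a l * x ^ (s - l)) *
        bernoulliPolyFun (n - s) y
      = ∑ i ∈ Finset.range (n + 1), (n.choose i : ℝ) * a i *
          bernoulliPolyFun (n - i) (x + y) := by
  have step1 : ∑ s ∈ Finset.range (n + 1), (n.choose s : ℝ) *
        (∑ l ∈ Finset.range (s + 1), (s.choose l : ℝ) * a l * x ^ (s - l)) *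
        bernoulliPolyFun (n - s) y
      = ∑ l ∈ Finset.range (n + 1), ∑ s ∈ Finset.range (n + 1),
          (n.choose s : ℝ) * (s.choose l : ℝ) * a l * x ^ (s - l) *
            bernoulliPolyFun (n - s) y := by
    rw [Finset.sum_comm]
    refine Finset.sum_congr rfl fun s hs => ?_
    rw [Finset.mul_sum, Finset.sum_mul]
    rw [Finset.sum_subset (Finset.range_subset_range.mpr (by simp at hs; omega) :
      Finset.range (s + 1) ⊆ Finset.range (n + 1))]
    · exact Finset.sum_congr rfl fun l hl => by ring
    · intro l hl hnl
      have : s < l := by simp only [Finset.mem_range, not_lt] at hnl ⊢; omega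
      simp [Nat.choose_eq_zero_of_lt this]
  rw [step1]
  refine Finset.sum_congr rfl fun l hl => ?_
  have hln : l ≤ n := by simp at hl; omega
  have step2 : ∑ s ∈ Finset.range (n + 1),
        (n.choose s : ℝ) * (s.choose l : ℝ) * a l * x ^ (s - l) * bernoulliPolyFun (n - s) y
      = ∑ s ∈ Finset.Ico l (n + 1),
        (n.choose s : ℝ) * (s.choose l : ℝ) * a l * x ^ (s - l) * bernoulliPolyFun (n - s) y := by
    refine (Finset.sum_subset (by intro s hs; simp at hs ⊢; omega) ?_).symm
    intro s hs hns
    have : s < l := by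
      simp only [Finset.mem_Ico, not_and, not_lt] at hns
      simp only [Finset.mem_range] at hs
      omega
    simp [Nat.choose_eq_zero_of_lt this]
  rw [step2, Finset.sum_Ico_eq_sum_range]
  have hrange : n + 1 - l = (n - l) + 1 := by omega
  rw [hrange]
  have step3 : ∀ j ∈ Finset.range ((n - l) + 1),
      (n.choose (l + j) : ℝ) * ((l + j).choose l : ℝ) * a l * x ^ (l + j - l) *
          bernoulliPolyFun (n - (l + j)) y
        = (n.choose l : ℝ) * a l * (((n - l).choose j : ℝ) * x ^ j *
            bernoulliPolyFun ((n - l) - j) y) := by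
    intro j hj
    have hjn : l + j ≤ n := by simp at hj; omega
    have hcc : n.choose (l + j) * (l + j).choose l = n.choose l * (n - l).choose j := by
      have := Nat.choose_mul (n := n) (k := l + j) (s := l) (Nat.le_add_right l j)
      simpa [Nat.add_sub_cancel_left] using this
    have hcc' : (n.choose (l + j) : ℝ) * ((l + j).choose l : ℝ) =
        (n.choose l : ℝ) * ((n - l).choose j : ℝ) := by exact_mod_cast congrArg Nat.cast hcc
    have he1 : l + j - l = j := by omega
    have he2 : n - (l + j) = (n - l) - j := by omega
    rw [he1, he2]
    calc (n.choose (l + j) : ℝ) * ((l + j).choose l : ℝ) * a l * x ^ j *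
        bernoulliPolyFun ((n - l) - j) y
        = ((n.choose (l + j) : ℝ) * ((l + j).choose l : ℝ)) *
            (a l * x ^ j * bernoulliPolyFun ((n - l) - j) y) := by ring
      _ = ((n.choose l : ℝ) * ((n - l).choose j : ℝ)) *
            (a l * x ^ j * bernoulliPolyFun ((n - l) - j) y) := by rw [hcc']
      _ = _ := by ring
  rw [Finset.sum_congr rfl step3, ← Finset.mul_sum, convol (n - l) x y]

open Finset in
lemma restructL (n : ℕ) (a : ℕ → ℝ) (z : ℝ) :
    ∑ s ∈ Finset.range (n + 1), (n.choose s : ℝ) * (bernoulli s : ℝ) *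
        (∑ l ∈ Finset.range (n - s + 1), ((n - s).choose l : ℝ) * a l) * z ^ (n - s)
      = ∑ i ∈ Finset.range (n + 1), (n.choose i : ℝ) * a i * z ^ i *
          bernoulliPolyFun (n - i) z := by
  have step1 : ∑ s ∈ Finset.range (n + 1), (n.choose s : ℝ) * (bernoulli s : ℝ) *
        (∑ l ∈ Finset.range (n - s + 1), ((n - s).choose l : ℝ) * a l) * z ^ (n - s)
      = ∑ l ∈ Finset.range (n + 1), ∑ s ∈ Finset.range (n + 1),
          (n.choose s : ℝ) * ((n - s).choose l : ℝ) * (bernoulli s : ℝ) * a l * z ^ l *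
            z ^ (n - s - l) := by
    rw [Finset.sum_comm]
    refine Finset.sum_congr rfl fun s hs => ?_
    have e1 : ∀ l ∈ Finset.range (n - s + 1),
        ((n - s).choose l : ℝ) * a l * z ^ (n - s) =
          ((n - s).choose l : ℝ) * a l * (z ^ l * z ^ (n - s - l)) := by
      intro l hl
      have hle : l ≤ n - s := by simpa [Nat.lt_succ_iff] using hl
      rw [← pow_add, Nat.add_sub_cancel' hle]
    calc (n.choose s : ℝ) * (bernoulli s : ℝ) *
          (∑ l ∈ Finset.range (n - s + 1), ((n - s).choose l : ℝ) * a l) * z ^ (n - s)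
        = ∑ l ∈ Finset.range (n - s + 1), (n.choose s : ℝ) * (bernoulli s : ℝ) *
            (((n - s).choose l : ℝ) * a l * z ^ (n - s)) := by
          rw [← Finset.mul_sum, ← Finset.sum_mul]; ring
      _ = ∑ l ∈ Finset.range (n + 1), (n.choose s : ℝ) * (bernoulli s : ℝ) *
            (((n - s).choose l : ℝ) * a l * (z ^ l * z ^ (n - s - l))) := by
          rw [Finset.sum_congr rfl fun l hl => by rw [e1 l hl]]
          refine Finset.sum_subset (Finset.range_subset_range.mpr (by omega) :
            Finset.range (n - s + 1) ⊆ Finset.range (n + 1)) ?_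
          intro l hl hnl
          have : n - s < l := by simp only [Finset.mem_range, not_lt] at hnl ⊢; omega
          simp [Nat.choose_eq_zero_of_lt this]
      _ = _ := Finset.sum_congr rfl fun l hl => by ring
  rw [step1]
  refine Finset.sum_congr rfl fun l hl => ?_
  have hln : l ≤ n := by simp at hl; omega
  have step2 : ∀ s ∈ Finset.range (n + 1),
      (n.choose s : ℝ) * ((n - s).choose l : ℝ) * (bernoulli s : ℝ) * a l * z ^ l *
          z ^ (n - s - l)
        = (n.choose l : ℝ) * a l * z ^ l *
            (((n - l).choose s : ℝ) * (bernoulli s : ℝ) * z ^ ((n - l) - s)) := by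
    intro s hs
    have hc : (n.choose s : ℝ) * ((n - s).choose l : ℝ) =
        (n.choose l : ℝ) * ((n - l).choose s : ℝ) := by
      exact_mod_cast congrArg (Nat.cast (R := ℝ)) (tri_choose n s l)
    have he : n - s - l = (n - l) - s := by omega
    rw [he]
    calc (n.choose s : ℝ) * ((n - s).choose l : ℝ) * (bernoulli s : ℝ) * a l * z ^ l *
          z ^ ((n - l) - s)
        = ((n.choose s : ℝ) * ((n - s).choose l : ℝ)) *
            ((bernoulli s : ℝ) * a l * z ^ l * z ^ ((n - l) - s)) := by ring
      _ = ((n.choose l : ℝ) * ((n - l).choose s : ℝ)) *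
            ((bernoulli s : ℝ) * a l * z ^ l * z ^ ((n - l) - s)) := by rw [hc]
      _ = _ := by ring
  rw [Finset.sum_congr rfl step2, ← Finset.mul_sum]
  congr 1
  unfold bernoulliPolyFun
  refine (Finset.sum_subset (Finset.range_subset_range.mpr (by omega) :
    Finset.range ((n - l) + 1) ⊆ Finset.range (n + 1)) ?_).symm
  intro s hs hns
  have : n - l < s := by simp only [Finset.mem_range, not_lt] at hns ⊢; omega
  simp [Nat.choose_eq_zero_of_lt this]

open Finset in
lemma bij_sum (h m : ℕ) (hm : 0 < m) (hcop : Nat.Coprime h m) (f : ℕ → ℝ) :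
    ∑ μ ∈ Finset.range m, f (h * μ % m) = ∑ r ∈ Finset.range m, f r := by
  rcases eq_or_lt_of_le (Nat.one_le_iff_ne_zero.mpr hm.ne') with h1 | h1
  · rw [← h1]
    simp
  · obtain ⟨b, -, hb⟩ := Nat.exists_mul_mod_eq_one_of_coprime hcop h1
    have hbm : h * b ≡ 1 [MOD m] := by
      unfold Nat.ModEq; rw [hb]; exact (Nat.mod_eq_of_lt h1).symm
    have cancel : ∀ u v : ℕ, u * v ≡ 1 [MOD m] → ∀ x : ℕ, x < m →
        u * (v * x % m) % m = x := by
      intro u v huv x hx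
      have h2 : u * (v * x % m) ≡ u * (v * x) [MOD m] :=
        Nat.ModEq.mul_left u (Nat.mod_modEq (v * x) m)
      have h4 : u * v * x ≡ 1 * x [MOD m] := Nat.ModEq.mul_right x huv
      have h5 : u * (v * x % m) ≡ x [MOD m] := by
        refine h2.trans ?_
        have : u * (v * x) = u * v * x := by ring
        rw [this]
        simpa using h4
      have := h5
      unfold Nat.ModEq at this
      rw [this, Nat.mod_eq_of_lt hx]
    refine Finset.sum_nbij' (fun μ => h * μ % m) (fun r => b * r % m)
      (fun μ _ => Finset.mem_range.mpr (Nat.mod_lt _ hm))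
      (fun r _ => Finset.mem_range.mpr (Nat.mod_lt _ hm)) ?_ ?_ (fun μ _ => rfl)
    · intro μ hμ
      exact cancel b h (by rwa [mul_comm] at hbm) μ (Finset.mem_range.mp hμ)
    · intro r hr
      exact cancel h b hbm r (Finset.mem_range.mp hr)

lemma floor_eq_div (h μ m : ℕ) (hm : 0 < m) :
    ⌊(h : ℝ) * μ / m⌋ = ((h * μ / m : ℕ) : ℤ) := by
  have h1 : (h : ℝ) * μ / m = ((h * μ : ℕ) : ℝ) / ((m : ℕ) : ℝ) := by push_cast; ring
  rw [h1, ← Int.natCast_floor_eq_floor (by positivity), Nat.floor_div_eq_div]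

/-- Theorem 8 of the paper. -/
theorem polyBernoulli_reciprocity_aux (h m : ℕ) (hh : 0 < h) (hm : 0 < m)
    (hcop : Nat.Coprime h m) (p : ℕ) (hodd : Odd p) (hp : 3 ≤ p) (k : ℤ) :
    ∑ s ∈ Finset.range (p + 2),
        ((p + 1).choose s : ℝ) * (bernoulli s : ℝ) * polyBernoulliPoly k (p + 1 - s) 1 *
          ((m : ℝ) * h) ^ (p + 1 - s) =
      (m : ℝ) ^ p * ∑ μ ∈ Finset.range m, ∑ s ∈ Finset.range (p + 2),
        ((p + 1).choose s : ℝ) * (h : ℝ) ^ s * polyBernoulliPoly k s ((μ : ℝ) / m) *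
          bernoulliPolyFun (p + 1 - s) ((h : ℝ) - (⌊((h : ℝ) * μ / m)⌋ : ℤ)) := by
  have hm0 : (m : ℝ) ≠ 0 := Nat.cast_ne_zero.mpr hm.ne'
  set A : ℕ → ℝ := fun l => (polyBernoulli k l : ℝ) with hA
  -- Step 1 : restructure the LHS
  have hstep1 : ∑ s ∈ Finset.range (p + 2),
        ((p + 1).choose s : ℝ) * (bernoulli s : ℝ) * polyBernoulliPoly k (p + 1 - s) 1 *
          ((m : ℝ) * h) ^ (p + 1 - s)
      = ∑ i ∈ Finset.range (p + 2), ((p + 1).choose i : ℝ) * A i * ((m : ℝ) * h) ^ i *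
          bernoulliPolyFun (p + 1 - i) ((m : ℝ) * h) := by
    have e1 : ∀ s ∈ Finset.range (p + 2),
        ((p + 1).choose s : ℝ) * (bernoulli s : ℝ) * polyBernoulliPoly k (p + 1 - s) 1 *
          ((m : ℝ) * h) ^ (p + 1 - s)
        = ((p + 1).choose s : ℝ) * (bernoulli s : ℝ) *
            (∑ l ∈ Finset.range (p + 1 - s + 1), (((p + 1 - s).choose l : ℝ)) * A l) *
            ((m : ℝ) * h) ^ (p + 1 - s) := by
      intro s _
      congr 2
      unfold polyBernoulliPoly
      exact Finset.sum_congr rfl fun l _ => by rw [one_pow, mul_one]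
    rw [Finset.sum_congr rfl e1]
    exact restructL (p + 1) A ((m : ℝ) * h)
  rw [hstep1]
  -- Step 2 : restructure the inner sum on the RHS
  have inner : ∀ μ ∈ Finset.range m,
      ∑ s ∈ Finset.range (p + 2),
        ((p + 1).choose s : ℝ) * (h : ℝ) ^ s * polyBernoulliPoly k s ((μ : ℝ) / m) *
          bernoulliPolyFun (p + 1 - s) ((h : ℝ) - (⌊((h : ℝ) * μ / m)⌋ : ℤ))
      = ∑ i ∈ Finset.range (p + 2), ((p + 1).choose i : ℝ) * A i * (h : ℝ) ^ i *
          bernoulliPolyFun (p + 1 - i) ((h : ℝ) + ((h * μ % m : ℕ) : ℝ) / m) := by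
    intro μ hμ
    have hfl : (((⌊((h : ℝ) * μ / m)⌋ : ℤ)) : ℝ) = ((h * μ / m : ℕ) : ℝ) := by
      rw [floor_eq_div h μ m hm]
      norm_cast
    have hx : (h : ℝ) * μ / m = ((h * μ / m : ℕ) : ℝ) + ((h * μ % m : ℕ) : ℝ) / m := by
      have hdm := Nat.div_add_mod (h * μ) m
      have hc : ((h : ℝ)) * μ = (m : ℝ) * ((h * μ / m : ℕ) : ℝ) + ((h * μ % m : ℕ) : ℝ) := by
        exact_mod_cast congrArg (Nat.cast (R := ℝ)) hdm.symm
      rw [hc]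
      field_simp
    have e2 : ∀ s ∈ Finset.range (p + 2),
        ((p + 1).choose s : ℝ) * (h : ℝ) ^ s * polyBernoulliPoly k s ((μ : ℝ) / m) *
          bernoulliPolyFun (p + 1 - s) ((h : ℝ) - (⌊((h : ℝ) * μ / m)⌋ : ℤ))
        = ((p + 1).choose s : ℝ) *
            (∑ l ∈ Finset.range (s + 1), (s.choose l : ℝ) * (A l * (h : ℝ) ^ l) *
              ((h : ℝ) * μ / m) ^ (s - l)) *
            bernoulliPolyFun (p + 1 - s) ((h : ℝ) - (⌊((h : ℝ) * μ / m)⌋ : ℤ)) := by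
      intro s _
      congr 1
      rw [mul_assoc]
      congr 1
      unfold polyBernoulliPoly
      rw [Finset.mul_sum]
      refine Finset.sum_congr rfl fun l hl => ?_
      have hls : l ≤ s := by simpa [Nat.lt_succ_iff] using hl
      have hpw : (h : ℝ) ^ s = (h : ℝ) ^ l * (h : ℝ) ^ (s - l) := by
        rw [← pow_add, Nat.add_sub_cancel' hls]
      have hmulpow : ((h : ℝ) * μ / m) ^ (s - l) =
          (h : ℝ) ^ (s - l) * ((μ : ℝ) / m) ^ (s - l) := by
        rw [← mul_pow]
        congr 1
        ring
      rw [hpw, hmulpow]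
      ring
    rw [Finset.sum_congr rfl e2,
      restruct (p + 1) (fun l => A l * (h : ℝ) ^ l) ((h : ℝ) * μ / m)
        ((h : ℝ) - (⌊((h : ℝ) * μ / m)⌋ : ℤ))]
    refine Finset.sum_congr rfl fun i hi => ?_
    have harg : (h : ℝ) * μ / m + ((h : ℝ) - (⌊((h : ℝ) * μ / m)⌋ : ℤ)) =
        (h : ℝ) + ((h * μ % m : ℕ) : ℝ) / m := by
      rw [hfl, hx]; ring
    rw [harg]
    ring
  conv_rhs => rw [Finset.sum_congr rfl inner, Finset.sum_comm]
  -- Step 3 : the coprimality bijection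
  have e3 : ∀ i ∈ Finset.range (p + 2),
      ∑ μ ∈ Finset.range m, ((p + 1).choose i : ℝ) * A i * (h : ℝ) ^ i *
          bernoulliPolyFun (p + 1 - i) ((h : ℝ) + ((h * μ % m : ℕ) : ℝ) / m)
      = ((p + 1).choose i : ℝ) * A i * (h : ℝ) ^ i *
          ∑ r ∈ Finset.range m, bernoulliPolyFun (p + 1 - i) ((h : ℝ) + (r : ℝ) / m) := by
    intro i _
    rw [← Finset.mul_sum]
    congr 1
    exact bij_sum h m hm hcop (fun r => bernoulliPolyFun (p + 1 - i) ((h : ℝ) + (r : ℝ) / m))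
  conv_rhs => rw [Finset.sum_congr rfl e3]
  rw [Finset.mul_sum]
  -- Step 4 : Raabe's multiplication formula, term by term
  refine Finset.sum_congr rfl fun i hi => ?_
  have hin : i ≤ p + 1 := by simpa [Nat.lt_succ_iff] using hi
  have hraabe := raabe_r m h hm (p + 1 - i)
  have key : (m : ℝ) ^ i * bernoulliPolyFun (p + 1 - i) ((m : ℝ) * h)
      = (m : ℝ) ^ p * ∑ r ∈ Finset.range m, bernoulliPolyFun (p + 1 - i) ((h : ℝ) + (r : ℝ) / m) := by
    have h2 : (m : ℝ) ^ i * ((m : ℝ) * bernoulliPolyFun (p + 1 - i) ((m : ℝ) * h))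
        = (m : ℝ) ^ i * ((m : ℝ) ^ (p + 1 - i) *
            ∑ r ∈ Finset.range m, bernoulliPolyFun (p + 1 - i) ((h : ℝ) + (r : ℝ) / m)) := by
      rw [hraabe]
    have hpow : (m : ℝ) ^ i * (m : ℝ) ^ (p + 1 - i) = (m : ℝ) * (m : ℝ) ^ p := by
      rw [← pow_add, ← pow_succ']
      congr 1
      omega
    apply mul_left_cancel₀ hm0
    calc (m : ℝ) * ((m : ℝ) ^ i * bernoulliPolyFun (p + 1 - i) ((m : ℝ) * h))
        = (m : ℝ) ^ i * ((m : ℝ) * bernoulliPolyFun (p + 1 - i) ((m : ℝ) * h)) := by ring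
      _ = (m : ℝ) ^ i * ((m : ℝ) ^ (p + 1 - i) *
            ∑ r ∈ Finset.range m, bernoulliPolyFun (p + 1 - i) ((h : ℝ) + (r : ℝ) / m)) := h2
      _ = ((m : ℝ) ^ i * (m : ℝ) ^ (p + 1 - i)) *
            ∑ r ∈ Finset.range m, bernoulliPolyFun (p + 1 - i) ((h : ℝ) + (r : ℝ) / m) := by ring
      _ = ((m : ℝ) * (m : ℝ) ^ p) *
            ∑ r ∈ Finset.range m, bernoulliPolyFun (p + 1 - i) ((h : ℝ) + (r : ℝ) / m) := by
          rw [hpow]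
      _ = (m : ℝ) * ((m : ℝ) ^ p *
            ∑ r ∈ Finset.range m, bernoulliPolyFun (p + 1 - i) ((h : ℝ) + (r : ℝ) / m)) := by ring
  calc ((p + 1).choose i : ℝ) * A i * ((m : ℝ) * h) ^ i *
        bernoulliPolyFun (p + 1 - i) ((m : ℝ) * h)
      = ((p + 1).choose i : ℝ) * A i * (h : ℝ) ^ i *
          ((m : ℝ) ^ i * bernoulliPolyFun (p + 1 - i) ((m : ℝ) * h)) := by
        rw [mul_pow]; ring
    _ = ((p + 1).choose i : ℝ) * A i * (h : ℝ) ^ i *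
          ((m : ℝ) ^ p * ∑ r ∈ Finset.range m,
            bernoulliPolyFun (p + 1 - i) ((h : ℝ) + (r : ℝ) / m)) := by rw [key]
    _ = (m : ℝ) ^ p * (((p + 1).choose i : ℝ) * A i * (h : ℝ) ^ i *
          ∑ r ∈ Finset.range m, bernoulliPolyFun (p + 1 - i) ((h : ℝ) + (r : ℝ) / m)) := by ring
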